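/- Let A ∈ GL(n,F) with μ_A = p^m for irreducible p, and let v, w ∈ F^n with μ_{A,v} = p^r, μ_{A,w} = p^s and s ≤ r. Then there exists w' ∈ F^n such that ⟨v⟩_A + ⟨w⟩_A = ⟨v⟩_A ⊕ ⟨w'⟩_A (i.e., the sum equals ⟨v⟩_A + ⟨w'⟩_A and ⟨v⟩_A ∩ ⟨w'⟩_A = {0}). -/

import Mathlib

open Polynomial Matrix

/-- `p` is the minimal polynomial of the vector `v` with respect to the matrix `A`
(row vectors, right multiplication). -/
def IsVecMinpoly {F : Type*} [Field F] {n : ℕ} (A : Matrix (Fin n) (Fin n) F)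
    (v : Fin n → F) (p : F[X]) : Prop :=
  p.Monic ∧ v ᵥ* (aeval A p) = 0 ∧ ∀ q : F[X], v ᵥ* (aeval A q) = 0 → p ∣ q

/-- The `A`-span `⟨v⟩_A = {v·p(A) : p ∈ F[X]}` of a vector `v`. -/
def aspan {F : Type*} [Field F] {n : ℕ} (A : Matrix (Fin n) (Fin n) F)
    (v : Fin n → F) : Submodule F (Fin n → F) :=
  Submodule.span F {w | ∃ p : F[X], w = v ᵥ* (aeval A p)}

/-- The companion matrix of a polynomial `p` (for the right-multiplication convention):
identity superdiagonal block, last row the negated coefficients of `p`. -/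
def companion {F : Type*} [Field F] (n : ℕ) (p : F[X]) : Matrix (Fin n) (Fin n) F :=
  Matrix.of fun i j => if (i : ℕ) = n - 1 then -p.coeff j
    else if (i : ℕ) + 1 = (j : ℕ) then 1 else 0

section Helpers
variable {F : Type*} [Field F] {n : ℕ}

lemma vecMul_smul' (a : Fin n → F) (c : F) (M : Matrix (Fin n) (Fin n) F) :
    a ᵥ* (c • M) = c • (a ᵥ* M) := by
  ext j
  simp only [Matrix.vecMul, dotProduct, Matrix.smul_apply, Pi.smul_apply, smul_eq_mul,
    Finset.mul_sum]
  exact Finset.sum_congr rfl fun i _ => by ring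

/-- `f ↦ v ᵥ* aeval A f` as a linear map. -/
noncomputable def phi (A : Matrix (Fin n) (Fin n) F) (v : Fin n → F) : F[X] →ₗ[F] (Fin n → F) where
  toFun f := v ᵥ* aeval A f
  map_add' f g := by
    show v ᵥ* aeval A (f + g) = v ᵥ* aeval A f + v ᵥ* aeval A g
    rw [_root_.map_add, Matrix.vecMul_add]
  map_smul' c f := by
    show v ᵥ* aeval A (c • f) = c • (v ᵥ* aeval A f)
    rw [_root_.map_smul, vecMul_smul']

lemma aspan_eq_range (A : Matrix (Fin n) (Fin n) F) (v : Fin n → F) :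
    aspan A v = LinearMap.range (phi A v) := by
  rw [aspan, ← Submodule.span_eq (LinearMap.range (phi A v))]
  congr 1
  ext x
  exact ⟨fun ⟨p, hp⟩ => ⟨p, hp.symm⟩, fun ⟨p, hp⟩ => ⟨p, hp.symm⟩⟩

lemma mem_aspan {A : Matrix (Fin n) (Fin n) F} {v x : Fin n → F} :
    x ∈ aspan A v ↔ ∃ f : F[X], x = v ᵥ* aeval A f := by
  rw [aspan_eq_range]
  exact ⟨fun ⟨f, hf⟩ => ⟨f, hf.symm⟩, fun ⟨f, hf⟩ => ⟨f, hf.symm⟩⟩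

lemma vecMul_aeval_mul (A : Matrix (Fin n) (Fin n) F) (v : Fin n → F) (f g : F[X]) :
    v ᵥ* aeval A (f * g) = (v ᵥ* aeval A f) ᵥ* aeval A g := by
  rw [_root_.map_mul, Matrix.vecMul_vecMul]

end Helpers

/-- If `μ_A = p^m`, `μ_{A,v} = p^r`, `μ_{A,w} = p^s` with `s ≤ r`, then there is `w'` with
`⟨v⟩_A + ⟨w⟩_A = ⟨v⟩_A ⊕ ⟨w'⟩_A`. -/
theorem stmt14 {F : Type*} [Field F] {n : ℕ} (A : Matrix (Fin n) (Fin n) F) (hA : IsUnit A)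
    (p : F[X]) (hp : p.Monic) (hirr : Irreducible p) (m r s : ℕ)
    (hmin : minpoly F A = p ^ m)
    (v w : Fin n → F) (hv : IsVecMinpoly A v (p ^ r)) (hw : IsVecMinpoly A w (p ^ s))
    (hsr : s ≤ r) :
    ∃ w' : Fin n → F,
      aspan A v ⊔ aspan A w = aspan A v ⊔ aspan A w' ∧
      aspan A v ⊓ aspan A w' = ⊥ := by
  classical
  -- the ideal of polynomials sending w into aspan v
  set I : Ideal F[X] :=
    { carrier := {f | w ᵥ* aeval A f ∈ aspan A v}
      add_mem' := by
        intro a b ha hb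
        simp only [Set.mem_setOf_eq, _root_.map_add, Matrix.vecMul_add] at *
        exact add_mem ha hb
      zero_mem' := by
        simp only [Set.mem_setOf_eq, _root_.map_zero, Matrix.vecMul_zero]
        exact zero_mem _
      smul_mem' := by
        intro c f hf
        simp only [Set.mem_setOf_eq, smul_eq_mul] at *
        rw [mul_comm, vecMul_aeval_mul]
        obtain ⟨g, hg⟩ := mem_aspan.mp hf
        rw [hg, ← vecMul_aeval_mul]
        exact mem_aspan.mpr ⟨g * c, rfl⟩ } with hI
  have hps_mem : (p ^ s : F[X]) ∈ I := by
    show w ᵥ* aeval A (p ^ s) ∈ aspan A v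
    rw [hw.2.1]; exact zero_mem _
  -- I is principal, generated by an associate of p^t
  obtain ⟨g₀, hg₀⟩ := (IsPrincipalIdealRing.principal I)
  rw [Ideal.submodule_span_eq] at hg₀
  have hg₀_dvd : g₀ ∣ p ^ s := by
    rw [← Ideal.mem_span_singleton, ← hg₀]; exact hps_mem
  obtain ⟨t, hts, hassoc⟩ := (dvd_prime_pow hirr.prime _).mp hg₀_dvd
  have hpt_mem : (p ^ t : F[X]) ∈ I := by
    rw [hg₀, Ideal.mem_span_singleton]
    exact hassoc.dvd
  have hdvd_of_mem : ∀ b ∈ I, (p ^ t : F[X]) ∣ b := by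
    intro b hb
    rw [hg₀, Ideal.mem_span_singleton] at hb
    exact hassoc.symm.dvd.trans hb
  -- w p^t(A) = v f(A)
  obtain ⟨f, hf⟩ := mem_aspan.mp hpt_mem
  -- show p^t ∣ f
  have hpne : (p : F[X]) ≠ 0 := hp.ne_zero
  have hzero : v ᵥ* aeval A (f * p ^ (s - t)) = 0 := by
    rw [vecMul_aeval_mul, ← hf, ← vecMul_aeval_mul, ← pow_add,
      Nat.add_sub_cancel' hts, hw.2.1]
  have hdvd1 : (p : F[X]) ^ r ∣ f * p ^ (s - t) := hv.2.2 _ hzero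
  have hdvd2 : (p : F[X]) ^ t ∣ f := by
    have h1 : (p : F[X]) ^ (r - (s - t)) * p ^ (s - t) ∣ f * p ^ (s - t) := by
      rwa [← pow_add, Nat.sub_add_cancel (by omega : s - t ≤ r)]
    have h2 := (mul_dvd_mul_iff_right (pow_ne_zero (s - t) hpne)).mp h1
    refine dvd_trans (pow_dvd_pow p ?_) h2
    omega
  obtain ⟨g, hg⟩ := hdvd2
  refine ⟨w - v ᵥ* aeval A g, ?_, ?_⟩
  · -- sup equality
    have key : ∀ h : F[X], (w - v ᵥ* aeval A g) ᵥ* aeval A h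
        = w ᵥ* aeval A h - v ᵥ* aeval A (g * h) := by
      intro h
      rw [Matrix.sub_vecMul, vecMul_aeval_mul]
    apply le_antisymm
    · refine sup_le le_sup_left ?_
      rw [aspan]
      refine Submodule.span_le.mpr ?_
      rintro x ⟨q, rfl⟩
      have : w ᵥ* aeval A q = (w - v ᵥ* aeval A g) ᵥ* aeval A q + v ᵥ* aeval A (g * q) := by
        rw [key]; ring
      rw [this]
      exact add_mem (Submodule.mem_sup_right (mem_aspan.mpr ⟨q, rfl⟩))
        (Submodule.mem_sup_left (mem_aspan.mpr ⟨g * q, rfl⟩))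
    · refine sup_le le_sup_left ?_
      rw [aspan]
      refine Submodule.span_le.mpr ?_
      rintro x ⟨q, rfl⟩
      rw [key]
      exact sub_mem (Submodule.mem_sup_right (mem_aspan.mpr ⟨q, rfl⟩))
        (Submodule.mem_sup_left (mem_aspan.mpr ⟨g * q, rfl⟩))
  · -- trivial intersection
    rw [eq_bot_iff]
    rintro x ⟨hx1, hx2⟩
    obtain ⟨b, hb⟩ := mem_aspan.mp hx2
    -- w b(A) ∈ aspan v
    have hbI : b ∈ I := by
      show w ᵥ* aeval A b ∈ aspan A v
      have : w ᵥ* aeval A b = x + v ᵥ* aeval A (g * b) := by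
        rw [hb, Matrix.sub_vecMul, vecMul_aeval_mul]; ring
      rw [this]
      exact add_mem hx1 (mem_aspan.mpr ⟨g * b, rfl⟩)
    obtain ⟨c, hc⟩ := hdvd_of_mem b hbI
    have hwt : (w - v ᵥ* aeval A g) ᵥ* aeval A (p ^ t) = 0 := by
      rw [Matrix.sub_vecMul, Matrix.vecMul_vecMul, ← _root_.map_mul, mul_comm, ← hg, ← hf,
        sub_self]
    have : x = 0 := by
      rw [hb, hc, vecMul_aeval_mul, hwt, Matrix.zero_vecMul]
    simp [this]
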